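/- The limit as R → ∞ (R real, R > 0) of the complex integral ∫₀^π i·R·e^{iθ}·e^{−R²·e^{2iθ}} dθ equals −√π (as a complex number). -/

import Mathlib

open Real Filter Complex MeasureTheory intervalIntegral Metric

noncomputable def semiF (R : ℝ) (θ : ℝ) : ℂ :=
  Complex.I * (R : ℂ) * Complex.exp (Complex.I * (θ : ℂ)) *
    Complex.exp (-((R : ℂ) ^ 2 * Complex.exp (2 * Complex.I * (θ : ℂ))))

noncomputable def semiF' (R : ℝ) (θ : ℝ) : ℂ :=
  (Complex.I * Complex.exp (Complex.I * (θ : ℂ)) -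
      2 * Complex.I * (R : ℂ) ^ 2 * Complex.exp (Complex.I * (θ : ℂ)) *
        Complex.exp (2 * Complex.I * (θ : ℂ))) *
    Complex.exp (-((R : ℂ) ^ 2 * Complex.exp (2 * Complex.I * (θ : ℂ))))

lemma semiF_contR (θ : ℝ) : Continuous fun R : ℝ => semiF R θ := by
  unfold semiF; fun_prop

lemma semiF_contθ (R : ℝ) : Continuous fun θ : ℝ => semiF R θ := by
  unfold semiF; fun_prop

lemma semiF'_contθ (R : ℝ) : Continuous fun θ : ℝ => semiF' R θ := by
  unfold semiF'; fun_prop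

lemma hasDerivAt_semiF_R (θ : ℝ) (R : ℝ) :
    HasDerivAt (fun R : ℝ => semiF R θ) (semiF' R θ) R := by
  set c : ℂ := Complex.exp (2 * Complex.I * (θ : ℂ)) with hc
  set e : ℂ := Complex.exp (Complex.I * (θ : ℂ)) with he
  have h1 : HasDerivAt (fun z : ℂ => Complex.I * z * e) (Complex.I * 1 * e) (R : ℂ) :=
    ((hasDerivAt_id ((R : ℂ))).const_mul Complex.I).mul_const e
  have h2 : HasDerivAt (fun z : ℂ => Complex.exp (-(z ^ 2 * c)))
      (Complex.exp (-(((R : ℂ)) ^ 2 * c)) * (-((2 : ℕ) * (R : ℂ) ^ 1 * c))) (R : ℂ) :=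
    (((hasDerivAt_pow 2 ((R : ℂ))).mul_const c).neg).cexp
  have h3 := (h1.mul h2).comp_ofReal
  convert h3 using 1
  · rfl
  unfold semiF'
  rw [← hc, ← he]
  ring

lemma hasDerivAt_semiF_θ (R : ℝ) (θ : ℝ) :
    HasDerivAt (fun θ : ℝ => Complex.exp (Complex.I * (θ : ℂ)) *
      Complex.exp (-((R : ℂ) ^ 2 * Complex.exp (2 * Complex.I * (θ : ℂ)))))
      (semiF' R θ) θ := by
  have h1 : HasDerivAt (fun z : ℂ => Complex.exp (Complex.I * z))
      (Complex.exp (Complex.I * (θ : ℂ)) * (Complex.I * 1)) (θ : ℂ) :=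
    ((hasDerivAt_id ((θ : ℂ))).const_mul Complex.I).cexp
  have h2 : HasDerivAt (fun z : ℂ => Complex.exp (-((R : ℂ) ^ 2 * Complex.exp (2 * Complex.I * z))))
      (Complex.exp (-((R : ℂ) ^ 2 * Complex.exp (2 * Complex.I * (θ : ℂ)))) *
        (-((R : ℂ) ^ 2 * (Complex.exp (2 * Complex.I * (θ : ℂ)) * (2 * Complex.I * 1))))) (θ : ℂ) :=
    (((((hasDerivAt_id ((θ : ℂ))).const_mul (2 * Complex.I)).cexp).const_mul ((R : ℂ) ^ 2)).neg).cexp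
  have h3 := (h1.mul h2).comp_ofReal
  convert h3 using 1
  · rfl
  unfold semiF'
  ring

lemma integral_semiF' (R : ℝ) :
    ∫ θ in (0:ℝ)..π, semiF' R θ = -2 * Complex.exp (-((R : ℂ) ^ 2)) := by
  rw [intervalIntegral.integral_eq_sub_of_hasDerivAt
    (f := fun θ : ℝ => Complex.exp (Complex.I * (θ : ℂ)) *
      Complex.exp (-((R : ℂ) ^ 2 * Complex.exp (2 * Complex.I * (θ : ℂ)))))
    (fun θ _ => hasDerivAt_semiF_θ R θ)
    ((semiF'_contθ R).intervalIntegrable 0 π)]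
  have e1 : Complex.I * (π : ℂ) = (π : ℂ) * Complex.I := by ring
  have e2 : 2 * Complex.I * (π : ℂ) = 2 * (π : ℂ) * Complex.I := by ring
  simp [e1, e2, Complex.exp_pi_mul_I, Complex.exp_two_pi_mul_I]
  ring

lemma hasDerivAt_integral_semiF (R₀ : ℝ) :
    HasDerivAt (fun R : ℝ => ∫ θ in (0:ℝ)..π, semiF R θ)
      (-2 * Complex.exp (-((R₀ : ℂ) ^ 2))) R₀ := by
  set M : ℝ := |R₀| + 1 with hM
  have key := intervalIntegral.hasDerivAt_integral_of_dominated_loc_of_deriv_le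
    (F := semiF) (F' := semiF') (x₀ := R₀) (a := 0) (b := π) (μ := MeasureTheory.volume)
    (bound := fun _ => (1 + 2 * M ^ 2) * Real.exp (M ^ 2)) (s := Metric.ball R₀ 1)
    (Metric.ball_mem_nhds R₀ one_pos)
    (Eventually.of_forall fun R => ((semiF_contθ R).aestronglyMeasurable).restrict)
    ((semiF_contθ R₀).intervalIntegrable 0 π)
    ((semiF'_contθ R₀).aestronglyMeasurable).restrict
    ?_ (by apply _root_.intervalIntegrable_const) ?_
  · rw [← integral_semiF' R₀]
    exact key.2
  · refine Eventually.of_forall fun θ _ x hx => ?_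
    have hxM : |x| ≤ M := by
      have := abs_sub_abs_le_abs_sub x R₀
      have h2 : |x - R₀| < 1 := by simpa [Real.dist_eq] using hx
      simp only [hM]; linarith
    unfold semiF'
    rw [norm_mul]
    have hE : ‖Complex.exp (-((x : ℂ) ^ 2 * Complex.exp (2 * Complex.I * (θ : ℂ))))‖ ≤
        Real.exp (M ^ 2) := by
      rw [Complex.norm_exp]
      apply Real.exp_le_exp.2
      have : (-((x : ℂ) ^ 2 * Complex.exp (2 * Complex.I * (θ : ℂ)))).re
          = -(x ^ 2 * Real.cos (2 * θ)) := by
        have : (2 * Complex.I * (θ : ℂ)) = ((2 * θ : ℝ) : ℂ) * Complex.I := by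
          push_cast; ring
        rw [this, Complex.neg_re, ← Complex.ofReal_pow, Complex.re_ofReal_mul,
          Complex.exp_ofReal_mul_I_re]
      rw [this]
      have h1 : x ^ 2 ≤ M ^ 2 := by
        have := pow_le_pow_left₀ (abs_nonneg x) hxM 2
        rwa [_root_.sq_abs] at this
      nlinarith [Real.neg_one_le_cos (2 * θ), sq_nonneg x]
    have hA : ‖Complex.I * Complex.exp (Complex.I * (θ : ℂ)) -
        2 * Complex.I * (x : ℂ) ^ 2 * Complex.exp (Complex.I * (θ : ℂ)) *
          Complex.exp (2 * Complex.I * (θ : ℂ))‖ ≤ 1 + 2 * M ^ 2 := by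
      have hne : ∀ t : ℝ, ‖Complex.exp (Complex.I * (t : ℂ))‖ = 1 := by
        intro t
        rw [Complex.norm_exp]
        simp
      have hne2 : ‖Complex.exp (2 * Complex.I * (θ : ℂ))‖ = 1 := by
        rw [Complex.norm_exp]
        simp
      calc ‖Complex.I * Complex.exp (Complex.I * (θ : ℂ)) -
          2 * Complex.I * (x : ℂ) ^ 2 * Complex.exp (Complex.I * (θ : ℂ)) *
            Complex.exp (2 * Complex.I * (θ : ℂ))‖
          ≤ ‖Complex.I * Complex.exp (Complex.I * (θ : ℂ))‖ +
            ‖2 * Complex.I * (x : ℂ) ^ 2 * Complex.exp (Complex.I * (θ : ℂ)) *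
              Complex.exp (2 * Complex.I * (θ : ℂ))‖ := norm_sub_le _ _
        _ ≤ 1 + 2 * M ^ 2 := by
            rw [norm_mul, norm_mul, norm_mul, norm_mul, hne θ, hne2]
            simp only [Complex.norm_I, norm_pow]
            have : ‖(x : ℂ)‖ = |x| := by simp [Complex.norm_real]
            rw [this]
            have h1 : |x| ^ 2 ≤ M ^ 2 := by
              nlinarith [abs_nonneg x, abs_nonneg R₀]
            have h2I : ‖(2 * Complex.I : ℂ)‖ = 2 := by simp
            rw [h2I]
            nlinarith
    calc _ ≤ (1 + 2 * M ^ 2) * Real.exp (M ^ 2) := by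
          apply mul_le_mul hA hE (norm_nonneg _)
          positivity
      _ = _ := rfl
  · exact Eventually.of_forall fun θ _ x _ => hasDerivAt_semiF_R θ x

theorem contour_integral_gaussian_semicircle :
    Tendsto (fun R : ℝ =>
      ∫ θ in (0:ℝ)..π,
        Complex.I * (R : ℂ) * Complex.exp (Complex.I * (θ : ℂ)) *
          Complex.exp (-((R : ℂ) ^ 2 * Complex.exp (2 * Complex.I * (θ : ℂ)))))
      atTop (nhds (-(Real.sqrt π) : ℂ)) := by
  set Fc : ℝ → ℂ := fun R => ∫ θ in (0:ℝ)..π, semiF R θ with hFc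
  have hexpc : Continuous fun x : ℝ => Complex.exp (-(x : ℂ) ^ 2) := by fun_prop
  set G : ℝ → ℂ := fun R => ∫ x in (0:ℝ)..R, Complex.exp (-(x : ℂ) ^ 2) with hG
  have hGderiv : ∀ R : ℝ, HasDerivAt G (Complex.exp (-(R : ℂ) ^ 2)) R := fun R =>
    intervalIntegral.integral_hasDerivAt_right (hexpc.intervalIntegrable 0 R)
      (hexpc.stronglyMeasurableAtFilter _ _) hexpc.continuousAt
  have hφ : ∀ R : ℝ, HasDerivAt (fun R => Fc R + 2 * G R) 0 R := by
    intro R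
    have := (hasDerivAt_integral_semiF R).add ((hGderiv R).const_mul 2)
    convert this using 1
    · rfl
    · rfl
    push_cast
    ring
  have hconst : ∀ R : ℝ, Fc R + 2 * G R = Fc 0 + 2 * G 0 := by
    intro R
    apply is_const_of_deriv_eq_zero (fun x => (hφ x).differentiableAt) fun x => (hφ x).deriv
  have hzero : Fc 0 + 2 * G 0 = 0 := by
    simp [hFc, hG, semiF]
  have hFcG : ∀ R : ℝ, Fc R = -2 * G R := by
    intro R
    have := hconst R
    rw [hzero] at this
    linear_combination this
  have hGreal : ∀ R : ℝ, G R = ((∫ x in (0:ℝ)..R, Real.exp (-x ^ 2) : ℝ) : ℂ) := by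
    intro R
    rw [hG]
    have hx : ∀ x : ℝ, Complex.exp (-(x : ℂ) ^ 2) = ((Real.exp (-x ^ 2) : ℝ) : ℂ) := by
      intro x; rw [Complex.ofReal_exp]; push_cast; ring_nf
    simp_rw [hx]
    rw [intervalIntegral.integral_ofReal]
  have htend : Tendsto (fun R : ℝ => ∫ x in (0:ℝ)..R, Real.exp (-x ^ 2)) atTop
      (nhds (Real.sqrt π / 2)) := by
    have h1 : IntegrableOn (fun x : ℝ => Real.exp (-x ^ 2)) (Set.Ioi 0) := by
      have := (integrable_exp_neg_mul_sq (b := 1) one_pos).integrableOn (s := Set.Ioi 0)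
      simpa using this
    have := intervalIntegral_tendsto_integral_Ioi 0 h1 tendsto_id
    have h2 : ∫ x in Set.Ioi (0:ℝ), Real.exp (-x ^ 2) = Real.sqrt π / 2 := by
      have := integral_gaussian_Ioi 1
      simpa using this
    rwa [h2] at this
  have final : Tendsto Fc atTop (nhds (-(Real.sqrt π) : ℂ)) := by
    have : Tendsto (fun R : ℝ => (-2 : ℂ) * ((∫ x in (0:ℝ)..R, Real.exp (-x ^ 2) : ℝ) : ℂ))
        atTop (nhds ((-2 : ℂ) * ((Real.sqrt π / 2 : ℝ) : ℂ))) :=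
      (((Complex.continuous_ofReal.tendsto _).comp htend).const_mul _)
    have heq : ((-2 : ℂ) * ((Real.sqrt π / 2 : ℝ) : ℂ)) = (-(Real.sqrt π) : ℂ) := by
      push_cast; ring
    rw [heq] at this
    apply this.congr
    intro R
    rw [hFcG R, hGreal R]
  exact final
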